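/- Let f : 2^N → ℝ be monotone and submodular with f(∅) = 0 and fmax > 0, and let γ ≥ 1. Let π be a permutation of N such that for every index i with f(π_i | π_{1:i−1}) > 0 and every element u ∈ N one has f(u | π_{1:i−1}) ≤ γ · f(π_i | π_{1:i−1}). Let S := {π_i : f(π_i | π_{1:i−1}) > 0}. Then f(S) = f(N), and |S| ≤ γ · (ln(fmax/fmin) + 1) · |S*| for every S* ⊆ N with f(S*) = f(N). -/

import Mathlib

open Finset

/-- The marginal value `f(u | C) := f({u} ∪ C) - f C`. -/
def marg {V : Type*} [DecidableEq V] (f : Finset V → ℝ) (u : V) (C : Finset V) : ℝ :=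
  f (insert u C) - f C

/-- The prefix `π_{1:i}` of a permutation `π` (0-indexed: the set of the first `i` elements). -/
def pref {V : Type*} [DecidableEq V] {n : ℕ} (π : Fin n → V) (i : ℕ) : Finset V :=
  (Finset.univ.filter fun j : Fin n => (j : ℕ) < i).image π

/-- The marginal coverage `mff_π(π_i) := f(π_i | π_{1:i-1})` of the element at position `i`. -/
def mff {V : Type*} [DecidableEq V] {n : ℕ} (f : Finset V → ℝ) (π : Fin n → V) (i : Fin n) : ℝ :=
  marg f (π i) (pref π i)

section Aux
variable {V : Type*} [DecidableEq V] {f : Finset V → ℝ}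

lemma marg_nonneg (hmono : ∀ A B : Finset V, A ⊆ B → f A ≤ f B) (u : V) (C : Finset V) :
    0 ≤ marg f u C := by
  have := hmono C (insert u C) (Finset.subset_insert _ _)
  simp [marg]; linarith

lemma marg_antitone (hmono : ∀ A B : Finset V, A ⊆ B → f A ≤ f B)
    (hsub : ∀ A B : Finset V, f (A ∪ B) + f (A ∩ B) ≤ f A + f B)
    {A B : Finset V} (hAB : A ⊆ B) (u : V) : marg f u B ≤ marg f u A := by
  by_cases hu : u ∈ B
  · have h1 : insert u B = B := Finset.insert_eq_self.2 hu
    have h2 := marg_nonneg hmono u A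
    simp only [marg, h1] at h2 ⊢
    linarith
  · have h := hsub (insert u A) B
    rw [Finset.insert_union, Finset.union_eq_right.2 hAB,
      Finset.insert_inter_of_notMem hu, Finset.inter_eq_left.2 hAB] at h
    simp [marg]; linarith

lemma expand (hmono : ∀ A B : Finset V, A ⊆ B → f A ≤ f B)
    (hsub : ∀ A B : Finset V, f (A ∪ B) + f (A ∩ B) ≤ f A + f B)
    (A C : Finset V) : f (A ∪ C) ≤ f C + ∑ u ∈ A, marg f u C := by
  induction A using Finset.induction_on with
  | empty => simp
  | @insert a A ha ih =>
    rw [Finset.sum_insert ha, Finset.insert_union]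
    have h1 : marg f a (A ∪ C) ≤ marg f a C :=
      marg_antitone hmono hsub Finset.subset_union_right a
    have h2 : f (insert a (A ∪ C)) = f (A ∪ C) + marg f a (A ∪ C) := by simp [marg]
    linarith

lemma pref_zero {n : ℕ} (π : Fin n → V) : pref π 0 = ∅ := by
  simp [pref]

lemma pref_succ {n : ℕ} (π : Fin n → V) (i : Fin n) :
    pref π ((i : ℕ) + 1) = insert (π i) (pref π (i : ℕ)) := by
  unfold pref
  ext v
  simp only [Finset.mem_image, Finset.mem_filter, Finset.mem_univ, true_and, Finset.mem_insert]
  constructor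
  · rintro ⟨j, hj, rfl⟩
    rcases Nat.lt_succ_iff_lt_or_eq.1 hj with h | h
    · exact Or.inr ⟨j, h, rfl⟩
    · exact Or.inl (by rw [Fin.ext h])
  · rintro (rfl | ⟨j, hj, rfl⟩)
    · exact ⟨i, Nat.lt_succ_self _, rfl⟩
    · exact ⟨j, Nat.lt_succ_of_lt hj, rfl⟩

lemma pref_all [Fintype V] (π : Fin (Fintype.card V) ≃ V) :
    pref (⇑π) (Fintype.card V) = Finset.univ := by
  unfold pref
  ext v
  simp only [Finset.mem_image, Finset.mem_filter, Finset.mem_univ, true_and, iff_true]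
  exact ⟨π.symm v, (π.symm v).isLt, π.apply_symm_apply v⟩

end Aux

noncomputable def Phi (β c r : ℝ) : ℝ :=
  if β * c ≤ r then β * Real.log (r / (β * c)) + β else r / c

lemma log_ge_aux {x : ℝ} (hx : 0 < x) : 1 - x⁻¹ ≤ Real.log x := by
  have h := Real.log_le_sub_one_of_pos (inv_pos.2 hx)
  rw [Real.log_inv] at h
  linarith

lemma Phi_nonneg {β c r : ℝ} (hc : 0 < c) (hβ : 1 ≤ β) (hr : 0 ≤ r) : 0 ≤ Phi β c r := by
  unfold Phi
  split_ifs with h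
  · have h1 : (1:ℝ) ≤ r / (β * c) := by
      rw [le_div_iff₀ (by positivity)]; linarith
    have := Real.log_nonneg h1
    nlinarith
  · positivity

lemma Phi_step {β c a b δ : ℝ} (hc : 0 < c) (hβ : 1 ≤ β) (hδ : c ≤ δ)
    (hab : a = b + δ) (hb : 0 ≤ b) (ha : a ≤ β * δ) : Phi β c b + 1 ≤ Phi β c a := by
  have hbc : 0 < β * c := by positivity
  have hδ0 : 0 < δ := lt_of_lt_of_le hc hδ
  have ha0 : 0 < a := by nlinarith
  have hba : β * b ≤ (β - 1) * a := by nlinarith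
  unfold Phi
  by_cases h1 : β * c ≤ b
  · have h2 : β * c ≤ a := by linarith
    rw [if_pos h1, if_pos h2]
    have hb0 : 0 < b := lt_of_lt_of_le hbc h1
    have hβ1 : 1 < β := by nlinarith
    have hβ0 : (0:ℝ) < β := by linarith
    have hlog : 1 - b / a ≤ Real.log (a / b) := by
      have := log_ge_aux (x := a / b) (by positivity)
      rwa [inv_div] at this
    have hlogs : Real.log (a / (β * c)) - Real.log (b / (β * c)) = Real.log (a / b) := by
      rw [Real.log_div (ne_of_gt ha0) (ne_of_gt hbc), Real.log_div (ne_of_gt hb0) (ne_of_gt hbc),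
        Real.log_div (ne_of_gt ha0) (ne_of_gt hb0)]
      ring
    have hfrac : b / a ≤ (β - 1) / β := by
      rw [div_le_div_iff₀ ha0 hβ0]
      nlinarith
    have h3 : 1 / β ≤ 1 - b / a := by
      have h4 : 1 / β = 1 - (β - 1) / β := by field_simp; ring
      linarith
    have key : 1 ≤ β * Real.log (a / b) := by
      calc (1:ℝ) = β * (1 / β) := by field_simp
        _ ≤ β * (1 - b / a) := by nlinarith
        _ ≤ β * Real.log (a / b) := by nlinarith
    have hexp : β * Real.log (a / (β * c)) - β * Real.log (b / (β * c)) = β * Real.log (a / b) := by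
      rw [← mul_sub, hlogs]
    linarith
  · by_cases h2 : β * c ≤ a
    · rw [if_neg h1, if_pos h2]
      push_neg at h1
      have hβ0 : (0:ℝ) < β := by linarith
      have hlog : 1 - (β * c) / a ≤ Real.log (a / (β * c)) := by
        have := log_ge_aux (x := a / (β * c)) (by positivity)
        rwa [inv_div] at this
      have h4 : β * (1 - β * c / a) ≤ β * Real.log (a / (β * c)) := by nlinarith
      by_cases h3 : (β - 1) * a ≤ β * (β * c)
      · have key2 : b * a + a * c ≤ 2 * β * a * c - β ^ 2 * c ^ 2 := by
          nlinarith [mul_nonneg (sub_nonneg.2 h2) (sub_nonneg.2 h3), hba,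
            mul_le_mul_of_nonneg_right hba (le_of_lt ha0)]
        have h5 : b / c + 1 ≤ β * (1 - β * c / a) + β := by
          rw [← sub_nonneg]
          have heq : β * (1 - β * c / a) + β - (b / c + 1) =
              (2 * β * a * c - β ^ 2 * c ^ 2 - (b * a + a * c)) / (a * c) := by
            field_simp
            ring
          rw [heq]
          apply div_nonneg (by linarith) (by positivity)
        linarith
      · push_neg at h3
        have hβ1 : 1 < β := by nlinarith
        have hfrac : β * c / a ≤ (β - 1) / β := by
          rw [div_le_div_iff₀ ha0 hβ0]
          nlinarith
        have h4' : 1 / β = 1 - (β - 1) / β := by field_simp; ring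
        have h5 : 1 / β ≤ 1 - β * c / a := by linarith
        have h6' := mul_le_mul_of_nonneg_left h5 (le_of_lt hβ0)
        rw [mul_one_div, div_self (ne_of_gt hβ0)] at h6'
        have h7 : b / c < β := by rw [div_lt_iff₀ hc]; linarith
        linarith
    · rw [if_neg h1, if_neg h2]
      have hbca : b + c ≤ a := by linarith
      have h5 : (b + c) / c ≤ a / c := by gcongr
      have h6 : b / c + 1 = (b + c) / c := by field_simp
      linarith

theorem greedy_trace_competitive_unitcost {V : Type*} [Fintype V] [DecidableEq V] [Nonempty V]
    (f : Finset V → ℝ)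
    (hmono : ∀ A B : Finset V, A ⊆ B → f A ≤ f B)
    (hsub : ∀ A B : Finset V, f (A ∪ B) + f (A ∩ B) ≤ f A + f B)
    (hf0 : f ∅ = 0)
    (γ : ℝ) (hγ : 1 ≤ γ)
    (fmax fmin : ℝ)
    (hfmax : fmax = Finset.univ.sup' Finset.univ_nonempty (fun u : V => marg f u ∅))
    (hfmaxpos : 0 < fmax)
    (hfmin_le : ∀ (u : V) (S : Finset V), 0 < marg f u S → fmin ≤ marg f u S)
    (hfmin_mem : ∃ (u : V) (S : Finset V), 0 < marg f u S ∧ marg f u S = fmin)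
    (π : Fin (Fintype.card V) ≃ V)
    (hgreedy : ∀ i : Fin (Fintype.card V), 0 < mff f π i →
      ∀ u : V, marg f u (pref π i) ≤ γ * mff f π i) :
    f ((Finset.univ.filter fun i : Fin (Fintype.card V) => 0 < mff f π i).image π)
        = f Finset.univ ∧
    ∀ Sstar : Finset V, f Sstar = f Finset.univ →
      (((Finset.univ.filter fun i : Fin (Fintype.card V) => 0 < mff f π i).image π).card : ℝ)
        ≤ γ * (Real.log (fmax / fmin) + 1) * (Sstar.card : ℝ) := by
  classical
  have hmarg0 : ∀ (u : V) (C : Finset V), 0 ≤ marg f u C := marg_nonneg hmono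
  set P : Finset (Fin (Fintype.card V)) :=
    Finset.univ.filter (fun i : Fin (Fintype.card V) => 0 < mff f π i) with hPdef
  set S : Finset V := P.image ⇑π with hSdef
  -- Part 1 : full coverage
  have hcover : ∀ i : ℕ, i ≤ Fintype.card V → f (S ∪ pref (⇑π) i) = f S := by
    intro i
    induction i with
    | zero => intro _; rw [pref_zero, Finset.union_empty]
    | succ i ih =>
      intro hi1
      have hi : i < Fintype.card V := hi1
      have hps := pref_succ (⇑π) ⟨i, hi⟩
      simp only [Fin.val_mk] at hps
      by_cases hpos : 0 < mff f π ⟨i, hi⟩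
      · have hmem : π ⟨i, hi⟩ ∈ S := by
          rw [hSdef]
          exact Finset.mem_image_of_mem _ (Finset.mem_filter.2 ⟨Finset.mem_univ _, hpos⟩)
        rw [hps, Finset.union_insert, Finset.insert_eq_self.2 (Finset.mem_union_left _ hmem)]
        exact ih (le_of_lt hi)
      · have h0 : marg f (π ⟨i, hi⟩) (pref (⇑π) i) = 0 :=
          le_antisymm (not_lt.1 hpos) (hmarg0 _ _)
        have h1 : marg f (π ⟨i, hi⟩) (S ∪ pref (⇑π) i) ≤ 0 := by
          calc marg f (π ⟨i, hi⟩) (S ∪ pref (⇑π) i)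
              ≤ marg f (π ⟨i, hi⟩) (pref (⇑π) i) :=
                marg_antitone hmono hsub Finset.subset_union_right _
            _ = 0 := h0
        have h2 : marg f (π ⟨i, hi⟩) (S ∪ pref (⇑π) i) = 0 := le_antisymm h1 (hmarg0 _ _)
        rw [hps, Finset.union_insert]
        have h3 : f (insert (π ⟨i, hi⟩) (S ∪ pref (⇑π) i)) = f (S ∪ pref (⇑π) i) := by
          unfold marg at h2; linarith
        rw [h3]
        exact ih (le_of_lt hi)
  have hpart1 : f S = f Finset.univ := by
    have h := hcover (Fintype.card V) le_rfl
    rw [pref_all π, Finset.union_eq_right.2 (Finset.subset_univ S)] at h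
    exact h.symm
  refine ⟨hpart1, ?_⟩
  -- Part 2 : cardinality bound
  intro Sstar hSstar
  obtain ⟨u₁, S₁, hpos₁, heq₁⟩ := hfmin_mem
  have hfminpos : 0 < fmin := heq₁ ▸ hpos₁
  obtain ⟨u₀, -, hu₀⟩ := Finset.exists_mem_eq_sup' (Finset.univ_nonempty)
    (fun u : V => marg f u ∅)
  have hfmaxeq : fmax = marg f u₀ ∅ := by rw [hfmax, hu₀]
  have hminmax : fmin ≤ fmax := by
    rw [hfmaxeq]
    exact hfmin_le u₀ ∅ (by rw [← hfmaxeq]; exact hfmaxpos)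
  have hfusingle : f {u₀} = fmax := by
    have h : marg f u₀ ∅ = f {u₀} - f ∅ := rfl
    rw [hfmaxeq, h, hf0, sub_zero]
  have hfuniv_pos : 0 < f Finset.univ :=
    lt_of_lt_of_le (hfusingle ▸ hfmaxpos) (hmono _ _ (Finset.subset_univ _))
  have hSne : Sstar.Nonempty := by
    rcases Finset.eq_empty_or_nonempty Sstar with h | h
    · exfalso; rw [h, hf0] at hSstar; linarith
    · exact h
  have hm1 : (1:ℝ) ≤ (Sstar.card : ℝ) := by
    exact_mod_cast Finset.card_pos.2 hSne
  set β : ℝ := γ * (Sstar.card : ℝ) with hβdef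
  have hβ1 : (1:ℝ) ≤ β := by nlinarith
  have hβ0 : (0:ℝ) < β := by linarith
  have hfuniv_le : f Finset.univ ≤ (Sstar.card : ℝ) * fmax := by
    have h2 := expand hmono hsub Sstar (∅ : Finset V)
    rw [Finset.union_empty, hf0] at h2
    have h3 : ∑ u ∈ Sstar, marg f u ∅ ≤ ∑ _u ∈ Sstar, fmax :=
      Finset.sum_le_sum (fun u _ => by rw [hfmax]; exact Finset.le_sup' (f := fun u : V => marg f u ∅) (Finset.mem_univ u))
    rw [Finset.sum_const, nsmul_eq_mul] at h3
    rw [← hSstar]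
    linarith
  have key : ∀ d i : ℕ, i + d = Fintype.card V →
      ((P.filter (fun j : Fin (Fintype.card V) => i ≤ (j : ℕ))).card : ℝ) ≤
        Phi β fmin (f Finset.univ - f (pref (⇑π) i)) := by
    intro d
    induction d with
    | zero =>
      intro i hi
      have hieq : i = Fintype.card V := by omega
      subst hieq
      have h1 : P.filter (fun j : Fin (Fintype.card V) => Fintype.card V ≤ (j : ℕ)) = ∅ := by
        apply Finset.filter_false_of_mem
        intro j _
        have := j.isLt
        omega
      rw [h1, pref_all π]
      simp only [Finset.card_empty, Nat.cast_zero, sub_self]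
      exact Phi_nonneg hfminpos hβ1 le_rfl
    | succ d ih =>
      intro i hi
      have hilt : i < Fintype.card V := by omega
      have ih' := ih (i + 1) (by omega)
      have hps := pref_succ (⇑π) ⟨i, hilt⟩
      simp only [Fin.val_mk] at hps
      by_cases hpos : 0 < mff f π ⟨i, hilt⟩
      · have hsetrel : P.filter (fun j : Fin (Fintype.card V) => i ≤ (j : ℕ)) =
            insert ⟨i, hilt⟩ (P.filter (fun j : Fin (Fintype.card V) => i + 1 ≤ (j : ℕ))) := by
          ext j
          simp only [Finset.mem_insert, Finset.mem_filter]
          constructor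
          · rintro ⟨hjP, hij⟩
            rcases eq_or_lt_of_le hij with h | h
            · exact Or.inl (Fin.ext h.symm)
            · exact Or.inr ⟨hjP, h⟩
          · rintro (rfl | ⟨hjP, hij⟩)
            · exact ⟨Finset.mem_filter.2 ⟨Finset.mem_univ _, hpos⟩, le_refl _⟩
            · exact ⟨hjP, by omega⟩
        have hnotmem : (⟨i, hilt⟩ : Fin (Fintype.card V)) ∉
            P.filter (fun j : Fin (Fintype.card V) => i + 1 ≤ (j : ℕ)) := by
          simp only [Finset.mem_filter, Fin.val_mk]
          rintro ⟨-, h⟩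
          omega
        have hcard : ((P.filter (fun j : Fin (Fintype.card V) => i ≤ (j : ℕ))).card : ℝ) =
            ((P.filter (fun j : Fin (Fintype.card V) => i + 1 ≤ (j : ℕ))).card : ℝ) + 1 := by
          rw [hsetrel, Finset.card_insert_of_notMem hnotmem]
          push_cast; ring
        have hδmarg : mff f π ⟨i, hilt⟩ = f (pref (⇑π) (i + 1)) - f (pref (⇑π) i) := by
          show marg f (π ⟨i, hilt⟩) (pref (⇑π) i) = _
          unfold marg
          rw [← hps]
        have hδfmin : fmin ≤ mff f π ⟨i, hilt⟩ := hfmin_le _ _ hpos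
        have hbnn : 0 ≤ f Finset.univ - f (pref (⇑π) (i + 1)) := by
          have := hmono (pref (⇑π) (i + 1)) Finset.univ (Finset.subset_univ _)
          linarith
        have haβδ : f Finset.univ - f (pref (⇑π) i) ≤ β * mff f π ⟨i, hilt⟩ := by
          have h1 : f Finset.univ ≤ f (Sstar ∪ pref (⇑π) i) := by
            have := hmono Sstar (Sstar ∪ pref (⇑π) i) Finset.subset_union_left
            rw [hSstar] at this; exact this
          have h2 := expand hmono hsub Sstar (pref (⇑π) i)
          have h3 : ∑ u ∈ Sstar, marg f u (pref (⇑π) i) ≤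
              ∑ _u ∈ Sstar, γ * mff f π ⟨i, hilt⟩ :=
            Finset.sum_le_sum (fun u _ => hgreedy ⟨i, hilt⟩ hpos u)
          rw [Finset.sum_const, nsmul_eq_mul] at h3
          have h4 : (Sstar.card : ℝ) * (γ * mff f π ⟨i, hilt⟩) = β * mff f π ⟨i, hilt⟩ := by
            rw [hβdef]; ring
          linarith
        have hstep := Phi_step hfminpos hβ1 hδfmin
          (show f Finset.univ - f (pref (⇑π) i) =
            (f Finset.univ - f (pref (⇑π) (i + 1))) + mff f π ⟨i, hilt⟩ by
            rw [hδmarg]; ring) hbnn haβδ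
        rw [hcard]
        linarith
      · have h0 : f (pref (⇑π) (i + 1)) = f (pref (⇑π) i) := by
          have h0' : marg f (π ⟨i, hilt⟩) (pref (⇑π) i) = 0 :=
            le_antisymm (not_lt.1 hpos) (hmarg0 _ _)
          rw [hps]; unfold marg at h0'; linarith
        have hsetrel : P.filter (fun j : Fin (Fintype.card V) => i ≤ (j : ℕ)) =
            P.filter (fun j : Fin (Fintype.card V) => i + 1 ≤ (j : ℕ)) := by
          ext j
          simp only [Finset.mem_filter]
          constructor
          · rintro ⟨hjP, hij⟩
            refine ⟨hjP, ?_⟩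
            rcases eq_or_lt_of_le hij with h | h
            · exfalso
              have hje : j = ⟨i, hilt⟩ := Fin.ext h.symm
              rw [hje, hPdef, Finset.mem_filter] at hjP
              exact hpos hjP.2
            · exact h
          · rintro ⟨hjP, hij⟩
            exact ⟨hjP, by omega⟩
        rw [hsetrel, ← h0]
        exact ih'
  have hfinal := key (Fintype.card V) 0 (by omega)
  have hfilterall : P.filter (fun j : Fin (Fintype.card V) => 0 ≤ (j : ℕ)) = P :=
    Finset.filter_true_of_mem (fun j _ => Nat.zero_le _)
  rw [hfilterall, pref_zero, hf0, sub_zero] at hfinal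
  have hcardS : (S.card : ℝ) = (P.card : ℝ) := by
    rw [hSdef, Finset.card_image_of_injective _ π.injective]
  have hbound : Phi β fmin (f Finset.univ) ≤
      γ * (Real.log (fmax / fmin) + 1) * (Sstar.card : ℝ) := by
    have hlogR : 0 ≤ Real.log (fmax / fmin) :=
      Real.log_nonneg (by rw [le_div_iff₀ hfminpos]; linarith)
    unfold Phi
    split_ifs with h
    · have h1 : f Finset.univ / (β * fmin) ≤ fmax / fmin := by
        rw [div_le_div_iff₀ (by positivity) hfminpos]
        have hmβ : (Sstar.card : ℝ) ≤ β := by nlinarith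
        nlinarith [mul_le_mul_of_nonneg_right hmβ (le_of_lt (mul_pos hfmaxpos hfminpos)),
          mul_le_mul_of_nonneg_right hfuniv_le (le_of_lt hfminpos)]
      have h2 : Real.log (f Finset.univ / (β * fmin)) ≤ Real.log (fmax / fmin) :=
        Real.log_le_log (by positivity) h1
      have h5 : γ * (Real.log (fmax / fmin) + 1) * (Sstar.card : ℝ) =
          β * Real.log (fmax / fmin) + β := by rw [hβdef]; ring
      rw [h5]
      nlinarith [mul_le_mul_of_nonneg_left h2 (le_of_lt hβ0)]
    · push_neg at h
      have h1 : f Finset.univ / fmin ≤ β := by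
        rw [div_le_iff₀ hfminpos]; linarith
      have h5 : γ * (Real.log (fmax / fmin) + 1) * (Sstar.card : ℝ) =
          β * Real.log (fmax / fmin) + β := by rw [hβdef]; ring
      rw [h5]
      nlinarith [mul_nonneg (le_of_lt hβ0) hlogR]
  calc (S.card : ℝ) = (P.card : ℝ) := hcardS
    _ ≤ Phi β fmin (f Finset.univ) := hfinal
    _ ≤ _ := hbound
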